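/- One-step inner bound for proximal (composite) VR-SGD: Let F = f + g with f = (1/n)∑f_i, each f_i L-smooth with 4L[F(x) − F(x*) + F(x̃) − F(x*)] bounding the estimator variance, g convex, x* minimizing F, and η = 1/(Lβ) with β > 1. Given x_k, let g_i = ∇f_i(x_k) − ∇f_i(x̃) + ∇f(x̃) and x_{k+1}^{(i)} = argmin_y { g(y) + ⟨g_i, y⟩ + (1/(2η))‖y − x_k‖² }. Then E[F(x_{k+1}^{(i)})] − F(x*) ≤ (2/(β−1))[F(x_k) − F(x*) + F(x̃) − F(x*)] + (Lβ/2) E[‖x* − x_k‖² − ‖x* − x_{k+1}^{(i)}‖²]. -/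

import Mathlib

open scoped BigOperators RealInnerProductSpace

open scoped RealInnerProductSpace BigOperators
open Set

variable {E : Type*} [NormedAddCommGroup E] [InnerProductSpace ℝ E] [CompleteSpace E]


lemma line_hasDerivAt (h : E → ℝ) (hd : Differentiable ℝ h) (x u : E) (t : ℝ) :
    HasDerivAt (fun s : ℝ => h (x + s • u)) ⟪gradient h (x + t • u), u⟫ t := by
  have hg : HasFDerivAt h (InnerProductSpace.toDual ℝ E (gradient h (x + t • u))) (x + t • u) :=
    (hd (x + t • u)).hasGradientAt
  have hline : HasDerivAt (fun s : ℝ => x + s • u) u t := by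
    simpa using ((hasDerivAt_id t).smul_const u).const_add x
  have := hg.comp_hasDerivAt t hline
  rw [InnerProductSpace.toDual_apply_apply] at this
  exact this


lemma descent_lemma (h : E → ℝ) (hd : Differentiable ℝ h) {L : ℝ} (hL : 0 < L)
    (hlip : ∀ x y, ‖gradient h x - gradient h y‖ ≤ L * ‖x - y‖) (x y : E) :
    h y ≤ h x + ⟪gradient h x, y - x⟫ + L / 2 * ‖y - x‖ ^ 2 := by
  set u := y - x with hu
  have hcontg : Continuous (fun z : E => gradient h z) := by
    have : LipschitzWith (Real.toNNReal L) (fun z : E => gradient h z) := by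
      apply LipschitzWith.of_dist_le_mul
      intro a b
      simpa [dist_eq_norm, Real.coe_toNNReal L hL.le] using hlip a b
    exact this.continuous
  have hD : Continuous (fun s : ℝ => ⟪gradient h (x + s • u), u⟫) :=
    Continuous.inner (hcontg.comp (by continuity)) continuous_const
  have hcont2 : Continuous (fun s : ℝ => ⟪gradient h x, u⟫ + L * s * ‖u‖ ^ 2) := by continuity
  have hFTC : h (x + (1:ℝ) • u) - h (x + (0:ℝ) • u)
      = ∫ s in (0:ℝ)..1, ⟪gradient h (x + s • u), u⟫ :=
    (intervalIntegral.integral_eq_sub_of_hasDerivAt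
      (fun t _ => line_hasDerivAt h hd x u t) (hD.intervalIntegrable 0 1)).symm
  have hmono : (∫ s in (0:ℝ)..1, ⟪gradient h (x + s • u), u⟫)
      ≤ ∫ s in (0:ℝ)..1, (⟪gradient h x, u⟫ + L * s * ‖u‖ ^ 2) := by
    refine intervalIntegral.integral_mono_on zero_le_one (hD.intervalIntegrable 0 1)
      (hcont2.intervalIntegrable 0 1) ?_
    intro s hs
    have h1 : ⟪gradient h (x + s • u), u⟫ - ⟪gradient h x, u⟫
        = ⟪gradient h (x + s • u) - gradient h x, u⟫ := (inner_sub_left _ _ _).symm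
    have h2 : ⟪gradient h (x + s • u) - gradient h x, u⟫
        ≤ ‖gradient h (x + s • u) - gradient h x‖ * ‖u‖ := real_inner_le_norm _ _
    have h3 : ‖gradient h (x + s • u) - gradient h x‖ ≤ L * ‖s • u‖ := by
      simpa using hlip (x + s • u) x
    have h4 : ‖s • u‖ = s * ‖u‖ := by
      rw [norm_smul, Real.norm_eq_abs, abs_of_nonneg hs.1]
    rw [h4] at h3
    have h5 := mul_le_mul_of_nonneg_right h3 (norm_nonneg u)
    nlinarith [h1, h2, h5]
  have hval : (∫ s in (0:ℝ)..1, (⟪gradient h x, u⟫ + L * s * ‖u‖ ^ 2))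
      = ⟪gradient h x, u⟫ + L / 2 * ‖u‖ ^ 2 := by
    have h1 : (fun s : ℝ => ⟪gradient h x, u⟫ + L * s * ‖u‖ ^ 2)
        = fun s : ℝ => ⟪gradient h x, u⟫ + (L * ‖u‖ ^ 2) * s := by funext s; ring
    rw [h1, intervalIntegral.integral_add (intervalIntegrable_const)
      ((intervalIntegral.intervalIntegrable_id (μ := MeasureTheory.volume) (a := 0) (b := 1)).const_mul _),
      intervalIntegral.integral_const_mul, integral_id]
    simp; ring
  have hx0 : x + (0:ℝ) • u = x := by simp
  have hx1 : x + (1:ℝ) • u = y := by simp [hu]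
  rw [hx0, hx1] at hFTC
  linarith

lemma deriv_le_of_slope_le {φ : ℝ → ℝ} {D c : ℝ} (hφ : HasDerivAt φ D 0)
    (hs : ∀ t ∈ Set.Ioo (0:ℝ) 1, (φ t - φ 0) / t ≤ c) : D ≤ c := by
  have h1 : Filter.Tendsto (slope φ 0) (nhdsWithin 0 {(0:ℝ)}ᶜ) (nhds D) :=
    hasDerivAt_iff_tendsto_slope.1 hφ
  have h2 : Filter.Tendsto (slope φ 0) (nhdsWithin 0 (Set.Ioi 0)) (nhds D) :=
    h1.mono_left (nhdsWithin_mono _ (fun t ht => ne_of_gt ht))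
  refine le_of_tendsto h2 ?_
  filter_upwards [Ioo_mem_nhdsGT_of_mem (Set.mem_Ico.2 ⟨le_refl _, zero_lt_one⟩)] with t ht
  simpa [slope_def_field, div_eq_inv_mul] using hs t ht


lemma le_deriv_of_le_slope {φ : ℝ → ℝ} {D c : ℝ} (hφ : HasDerivAt φ D 0)
    (hs : ∀ t ∈ Set.Ioo (0:ℝ) 1, c ≤ (φ t - φ 0) / t) : c ≤ D := by
  have h1 : Filter.Tendsto (slope φ 0) (nhdsWithin 0 {(0:ℝ)}ᶜ) (nhds D) :=
    hasDerivAt_iff_tendsto_slope.1 hφ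
  have h2 : Filter.Tendsto (slope φ 0) (nhdsWithin 0 (Set.Ioi 0)) (nhds D) :=
    h1.mono_left (nhdsWithin_mono _ (fun t ht => ne_of_gt ht))
  refine ge_of_tendsto h2 ?_
  filter_upwards [Ioo_mem_nhdsGT_of_mem (Set.mem_Ico.2 ⟨le_refl _, zero_lt_one⟩)] with t ht
  simpa [slope_def_field, div_eq_inv_mul] using hs t ht


lemma convex_grad_le (h : E → ℝ) (hc : ConvexOn ℝ Set.univ h) (hd : Differentiable ℝ h)
    (x y : E) : h x + ⟪gradient h x, y - x⟫ ≤ h y := by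
  have hder : HasDerivAt (fun s : ℝ => h (x + s • (y - x))) ⟪gradient h x, y - x⟫ 0 := by
    have := line_hasDerivAt h hd x (y - x) 0
    simpa using this
  have key : ⟪gradient h x, y - x⟫ ≤ h y - h x := by
    refine deriv_le_of_slope_le hder ?_
    intro t ht
    have hcomb : x + t • (y - x) = (1 - t) • x + t • y := by
      rw [sub_smul, smul_sub, one_smul]; abel
    have hcv := hc.2 (Set.mem_univ x) (Set.mem_univ y)
      (by linarith [ht.2] : (0:ℝ) ≤ 1 - t) (le_of_lt ht.1) (by ring)
    rw [← hcomb] at hcv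
    simp only [smul_eq_mul] at hcv
    rw [div_le_iff₀ ht.1]
    simp only [zero_smul, add_zero]
    nlinarith [ht.1]
  linarith


lemma coco (h : E → ℝ) (hc : ConvexOn ℝ Set.univ h) (hd : Differentiable ℝ h) {L : ℝ}
    (hL : 0 < L) (hlip : ∀ x y, ‖gradient h x - gradient h y‖ ≤ L * ‖x - y‖)
    (descent : ∀ x y : E, h y ≤ h x + ⟪gradient h x, y - x⟫ + L / 2 * ‖y - x‖ ^ 2)
    (x y : E) :
    ‖gradient h x - gradient h y‖ ^ 2 ≤ 2 * L * (h x - h y - ⟪gradient h y, x - y⟫) := by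
  set w := gradient h x - gradient h y with hw
  set z := x - L⁻¹ • w with hz
  have h1 : h z ≤ h x + ⟪gradient h x, z - x⟫ + L / 2 * ‖z - x‖ ^ 2 := descent x z
  have h2 : h y + ⟪gradient h y, z - y⟫ ≤ h z := convex_grad_le h hc hd y z
  have hzx : z - x = -(L⁻¹ • w) := by rw [hz]; abel
  have e1 : ⟪gradient h x, z - x⟫ = -(L⁻¹ * ⟪gradient h x, w⟫) := by
    rw [hzx, inner_neg_right, real_inner_smul_right]
  have e2 : ‖z - x‖ ^ 2 = L⁻¹ ^ 2 * ‖w‖ ^ 2 := by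
    rw [hzx, norm_neg, norm_smul, Real.norm_eq_abs, abs_of_nonneg (inv_nonneg.2 hL.le),
      mul_pow]
  have e3 : ⟪gradient h y, z - y⟫ = ⟪gradient h y, x - y⟫ - L⁻¹ * ⟪gradient h y, w⟫ := by
    have : z - y = (x - y) - L⁻¹ • w := by rw [hz]; abel
    rw [this, inner_sub_right, real_inner_smul_right]
  have e4 : ⟪gradient h x, w⟫ - ⟪gradient h y, w⟫ = ‖w‖ ^ 2 := by
    rw [← inner_sub_left, ← hw, real_inner_self_eq_norm_sq]
  have hLne : L ≠ 0 := ne_of_gt hL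
  rw [e1, e2] at h1
  rw [e3] at h2
  have final : L⁻¹ * ‖w‖ ^ 2 - L / 2 * (L⁻¹ ^ 2 * ‖w‖ ^ 2)
      ≤ h x - h y - ⟪gradient h y, x - y⟫ := by
    have e5 : L⁻¹ * ⟪gradient h x, w⟫ - L⁻¹ * ⟪gradient h y, w⟫ = L⁻¹ * ‖w‖ ^ 2 := by
      rw [← mul_sub, e4]
    linarith
  have : L⁻¹ * ‖w‖ ^ 2 - L / 2 * (L⁻¹ ^ 2 * ‖w‖ ^ 2) = ‖w‖ ^ 2 / (2 * L) := by
    field_simp; ring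
  rw [this] at final
  rw [div_le_iff₀ (by positivity : (0:ℝ) < 2 * L)] at final
  linarith [final]

lemma comb_norm_sq (a b : E) (t : ℝ) :
    ‖(1 - t) • a + t • b‖ ^ 2
      = (1 - t) * ‖a‖ ^ 2 + t * ‖b‖ ^ 2 - t * (1 - t) * ‖a - b‖ ^ 2 := by
  have h1 : ∀ v : E, ‖v‖ ^ 2 = ⟪v, v⟫ := fun v => (real_inner_self_eq_norm_sq v).symm
  rw [h1, h1, h1, h1]
  simp only [inner_add_add_self, inner_sub_sub_self, real_inner_smul_left,
    real_inner_smul_right, real_inner_comm a b]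
  ring


lemma prox_strong (g : E → ℝ) (hg : ConvexOn ℝ Set.univ g) (v xk m : E) {c : ℝ} (hc : 0 < c)
    (hm : ∀ y, g m + ⟪v, m⟫ + c * ‖m - xk‖ ^ 2 ≤ g y + ⟪v, y⟫ + c * ‖y - xk‖ ^ 2) (y : E) :
    g m + ⟪v, m⟫ + c * ‖m - xk‖ ^ 2 + c * ‖y - m‖ ^ 2
      ≤ g y + ⟪v, y⟫ + c * ‖y - xk‖ ^ 2 := by
  set φ : E → ℝ := fun z => g z + ⟪v, z⟫ + c * ‖z - xk‖ ^ 2 with hφ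
  have key : ∀ t ∈ Set.Ioo (0:ℝ) 1, φ m + c * (1 - t) * ‖y - m‖ ^ 2 ≤ φ y := by
    intro t ht
    set zt : E := (1 - t) • m + t • y with hzt
    have hgz : g zt ≤ (1 - t) * g m + t * g y := by
      have := hg.2 (Set.mem_univ m) (Set.mem_univ y)
        (by linarith [ht.2] : (0:ℝ) ≤ 1 - t) (le_of_lt ht.1) (by ring)
      simpa using this
    have hiz : ⟪v, zt⟫ = (1 - t) * ⟪v, m⟫ + t * ⟪v, y⟫ := by
      rw [hzt, inner_add_right, real_inner_smul_right, real_inner_smul_right]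
    have hnz : ‖zt - xk‖ ^ 2 = (1 - t) * ‖m - xk‖ ^ 2 + t * ‖y - xk‖ ^ 2
        - t * (1 - t) * ‖y - m‖ ^ 2 := by
      have hz2 : zt - xk = (1 - t) • (m - xk) + t • (y - xk) := by
        rw [hzt, smul_sub, smul_sub, sub_smul, sub_smul]
        simp only [one_smul]
        abel
      rw [hz2, comb_norm_sq]
      have : (m - xk) - (y - xk) = m - y := by abel
      rw [this, ← norm_neg (m - y)]
      have : -(m - y) = y - m := by abel
      rw [this]
    have hmzt := hm zt
    have : φ m ≤ (1 - t) * φ m + t * φ y - c * (t * (1 - t)) * ‖y - m‖ ^ 2 := by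
      calc φ m ≤ φ zt := hmzt
        _ ≤ (1 - t) * φ m + t * φ y - c * (t * (1 - t)) * ‖y - m‖ ^ 2 := by
            simp only [hφ]; rw [hnz] at *
            nlinarith [hgz, hiz]
    have ht1 := ht.1
    nlinarith [this]
  -- now conclude
  have h0 : φ m ≤ φ y := hm y
  by_contra hcon
  push_neg at hcon
  set A := c * ‖y - m‖ ^ 2 with hA
  have hA0 : 0 ≤ A := by positivity
  have hΔ : φ y - φ m < A := by simp only [hφ] at hcon ⊢; linarith
  have hApos : 0 < A := lt_of_le_of_lt (by linarith) hΔ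
  set t : ℝ := (1 - (φ y - φ m) / A) / 2 with htdef
  have hratio0 : 0 ≤ (φ y - φ m) / A := div_nonneg (by linarith) hA0
  have hratio1 : (φ y - φ m) / A < 1 := (div_lt_one hApos).2 hΔ
  have ht : t ∈ Set.Ioo (0:ℝ) 1 := ⟨by simp only [htdef]; linarith, by simp only [htdef]; linarith⟩
  have hk := key t ht
  have : c * (1 - t) * ‖y - m‖ ^ 2 = (1 - t) * A := by rw [hA]; ring
  rw [this] at hk
  have h1t : 1 - t = (1 + (φ y - φ m) / A) / 2 := by rw [htdef]; ring
  rw [h1t] at hk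
  have : (1 + (φ y - φ m) / A) / 2 * A = (A + (φ y - φ m)) / 2 := by
    field_simp
  rw [this] at hk
  linarith


lemma sum_sq_dev_le {n : ℕ} (hn : 0 < n) (a : Fin n → E) :
    ∑ i, ‖a i - (1 / n : ℝ) • ∑ j, a j‖ ^ 2 ≤ ∑ i, ‖a i‖ ^ 2 := by
  set ab : E := (1 / n : ℝ) • ∑ j, a j with hab
  have hsum : ∑ j, a j = (n : ℝ) • ab := by
    rw [hab, smul_smul]
    have : (n : ℝ) * (1 / n) = 1 := by
      field_simp
    rw [this, one_smul]
  have hexp : ∀ i : Fin n, ‖a i - ab‖ ^ 2 = ‖a i‖ ^ 2 - 2 * ⟪a i, ab⟫ + ‖ab‖ ^ 2 :=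
    fun i => norm_sub_sq_real _ _
  have hsum2 : ∑ i, ⟪a i, ab⟫ = (n : ℝ) * ‖ab‖ ^ 2 := by
    rw [← sum_inner, hsum, real_inner_smul_left, real_inner_self_eq_norm_sq]
  calc ∑ i, ‖a i - ab‖ ^ 2 = ∑ i, (‖a i‖ ^ 2 - 2 * ⟪a i, ab⟫ + ‖ab‖ ^ 2) :=
        Finset.sum_congr rfl (fun i _ => hexp i)
    _ = ∑ i, ‖a i‖ ^ 2 - 2 * ∑ i, ⟪a i, ab⟫ + (n : ℝ) * ‖ab‖ ^ 2 := by
        rw [Finset.sum_add_distrib, Finset.sum_sub_distrib, ← Finset.mul_sum]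
        simp [Finset.card_univ]
    _ = ∑ i, ‖a i‖ ^ 2 - (n : ℝ) * ‖ab‖ ^ 2 := by rw [hsum2]; ring
    _ ≤ ∑ i, ‖a i‖ ^ 2 := by
        have : 0 ≤ (n : ℝ) * ‖ab‖ ^ 2 := by positivity
        linarith


lemma norm_sub_sq_le_two (p q : E) : ‖p - q‖ ^ 2 ≤ 2 * ‖p‖ ^ 2 + 2 * ‖q‖ ^ 2 := by
  have h1 : ‖p - q‖ ≤ ‖p‖ + ‖q‖ := norm_sub_le p q
  nlinarith [norm_nonneg (p - q), norm_nonneg p, norm_nonneg q, sq_nonneg (‖p‖ - ‖q‖)]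


lemma young_inner (u w : E) {c : ℝ} (hc : 0 < c) :
    ⟪u, w⟫ ≤ 1 / (2 * c) * ‖u‖ ^ 2 + c / 2 * ‖w‖ ^ 2 := by
  have h1 : ⟪u, w⟫ ≤ ‖u‖ * ‖w‖ := real_inner_le_norm u w
  have h2 : ‖u‖ * ‖w‖ ≤ 1 / (2 * c) * ‖u‖ ^ 2 + c / 2 * ‖w‖ ^ 2 := by
    rw [← sub_nonneg]
    have : 1 / (2 * c) * ‖u‖ ^ 2 + c / 2 * ‖w‖ ^ 2 - ‖u‖ * ‖w‖
        = (‖u‖ - c * ‖w‖) ^ 2 / (2 * c) := by field_simp; ring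
    rw [this]; positivity
  linarith

set_option maxHeartbeats 1000000 in
/-- one-step inner bound for proximal (composite) VR-SGD; the expectation
over the uniformly random index `i` is the average over `i : Fin n`. -/
theorem stmt_9 (d n : ℕ) (hn : 0 < n) (L β η : ℝ) (hL : 0 < L) (hβ : 1 < β)
    (hη : η = 1 / (L * β))
    (f : Fin n → EuclideanSpace ℝ (Fin d) → ℝ)
    (hconv : ∀ i, ConvexOn ℝ Set.univ (f i))
    (hdiff : ∀ i, Differentiable ℝ (f i))
    (hlip : ∀ i x y, ‖gradient (f i) x - gradient (f i) y‖ ≤ L * ‖x - y‖)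
    (favg : EuclideanSpace ℝ (Fin d) → ℝ)
    (hfavg : ∀ x, favg x = (1 / n : ℝ) * ∑ i, f i x)
    (g : EuclideanSpace ℝ (Fin d) → ℝ) (hgconv : ConvexOn ℝ Set.univ g)
    (F : EuclideanSpace ℝ (Fin d) → ℝ) (hF : ∀ x, F x = favg x + g x)
    (xstar : EuclideanSpace ℝ (Fin d)) (hmin : ∀ x, F xstar ≤ F x)
    (xk xt : EuclideanSpace ℝ (Fin d))
    (xnext : Fin n → EuclideanSpace ℝ (Fin d))
    (hxnext : ∀ i y,
      g (xnext i) + ⟪gradient (f i) xk - gradient (f i) xt + gradient favg xt, xnext i⟫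
          + (1 / (2 * η)) * ‖xnext i - xk‖ ^ 2
        ≤ g y + ⟪gradient (f i) xk - gradient (f i) xt + gradient favg xt, y⟫
          + (1 / (2 * η)) * ‖y - xk‖ ^ 2) :
    (1 / n : ℝ) * ∑ i, (F (xnext i)) - F xstar
      ≤ (2 / (β - 1)) * ((F xk - F xstar) + (F xt - F xstar))
        + (L * β / 2) *
          ((1 / n : ℝ) * ∑ i, (‖xstar - xk‖ ^ 2 - ‖xstar - xnext i‖ ^ 2)) := by
  have hn' : (0:ℝ) < n := Nat.cast_pos.2 hn
  have hnne : (n:ℝ) ≠ 0 := ne_of_gt hn'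
  have hb1 : (0:ℝ) < β - 1 := by linarith
  have hβ0 : (0:ℝ) < β := by linarith
  have hLβ : (0:ℝ) < L * β := mul_pos hL hβ0
  have hfavg' : favg = fun x => (1 / n : ℝ) * ∑ i, f i x := funext hfavg
  have hdsum : Differentiable ℝ (fun x : EuclideanSpace ℝ (Fin d) => ∑ i, f i x) :=
    Differentiable.fun_sum (fun i _ => hdiff i)
  have hdfavg : Differentiable ℝ favg := by rw [hfavg']; exact hdsum.const_mul _
  have hgradavg : ∀ x, gradient favg x = (1 / n : ℝ) • ∑ i, gradient (f i) x := by
    intro x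
    have hs : HasFDerivAt (fun x : EuclideanSpace ℝ (Fin d) => ∑ i, f i x)
        (∑ i, fderiv ℝ (f i) x) x := HasFDerivAt.fun_sum (fun i _ => (hdiff i x).hasFDerivAt)
    have hm : HasFDerivAt favg ((1 / n : ℝ) • ∑ i, fderiv ℝ (f i) x) x := by
      rw [hfavg']; exact hs.const_mul _
    rw [hm.hasGradientAt.gradient, map_smul, map_sum]
    rfl
  have hlipavg : ∀ x y, ‖gradient favg x - gradient favg y‖ ≤ L * ‖x - y‖ := by
    intro x y
    rw [hgradavg, hgradavg, ← smul_sub, ← Finset.sum_sub_distrib]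
    rw [norm_smul, Real.norm_eq_abs, abs_of_nonneg (by positivity : (0:ℝ) ≤ 1/(n:ℝ))]
    calc (1/(n:ℝ)) * ‖∑ i, (gradient (f i) x - gradient (f i) y)‖
        ≤ (1/(n:ℝ)) * ∑ i, ‖gradient (f i) x - gradient (f i) y‖ :=
          mul_le_mul_of_nonneg_left (norm_sum_le _ _) (by positivity)
      _ ≤ (1/(n:ℝ)) * ∑ _i : Fin n, L * ‖x - y‖ :=
          mul_le_mul_of_nonneg_left (Finset.sum_le_sum (fun i _ => hlip i x y)) (by positivity)
      _ = L * ‖x - y‖ := by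
          rw [Finset.sum_const, Finset.card_univ, Fintype.card_fin, nsmul_eq_mul]
          field_simp
  have hconvavg : ConvexOn ℝ Set.univ favg := by
    rw [hfavg']
    refine ⟨convex_univ, ?_⟩
    intro x _ y _ a b ha hb hab
    simp only [smul_eq_mul]
    have h1 : ∑ i, f i (a • x + b • y) ≤ ∑ i, (a * f i x + b * f i y) :=
      Finset.sum_le_sum (fun i _ => by
        simpa using (hconv i).2 (Set.mem_univ x) (Set.mem_univ y) ha hb hab)
    calc (1/(n:ℝ)) * ∑ i, f i (a • x + b • y) ≤ (1/(n:ℝ)) * ∑ i, (a * f i x + b * f i y) :=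
          mul_le_mul_of_nonneg_left h1 (by positivity)
      _ = a * ((1/(n:ℝ)) * ∑ i, f i x) + b * ((1/(n:ℝ)) * ∑ i, f i y) := by
          rw [Finset.sum_add_distrib, ← Finset.mul_sum, ← Finset.mul_sum]; ring
  have hcoco : ∀ i (x y : EuclideanSpace ℝ (Fin d)),
      ‖gradient (f i) x - gradient (f i) y‖ ^ 2
        ≤ 2 * L * (f i x - f i y - ⟪gradient (f i) y, x - y⟫) :=
    fun i x y => coco (f i) (hconv i) (hdiff i) hL (hlip i)
      (descent_lemma (f i) (hdiff i) hL (hlip i)) x y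
  have hopt : ∀ w, g xstar - g w ≤ ⟪gradient favg xstar, w - xstar⟫ := by
    intro w
    have hder : HasDerivAt (fun s : ℝ => favg (xstar + s • (w - xstar)))
        ⟪gradient favg xstar, w - xstar⟫ 0 := by
      simpa using line_hasDerivAt favg hdfavg xstar (w - xstar) 0
    refine le_deriv_of_le_slope hder ?_
    intro t ht
    have hcomb : xstar + t • (w - xstar) = (1 - t) • xstar + t • w := by
      rw [sub_smul, smul_sub, one_smul]; abel
    have hgz : g (xstar + t • (w - xstar)) ≤ (1 - t) * g xstar + t * g w := by
      rw [hcomb]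
      simpa using hgconv.2 (Set.mem_univ xstar) (Set.mem_univ w)
        (by linarith [ht.2] : (0:ℝ) ≤ 1 - t) ht.1.le (by ring)
    have hFz := hmin (xstar + t • (w - xstar))
    rw [hF, hF] at hFz
    rw [le_div_iff₀ ht.1]
    simp only [zero_smul, add_zero]
    nlinarith [hFz, hgz, ht.1]
  -- the prox inequality with the strong-convexity term
  have hc0 : (1 : ℝ) / (2 * η) = L * β / 2 := by
    rw [hη]; field_simp
  have hprox : ∀ i,
      g (xnext i) + ⟪gradient (f i) xk - gradient (f i) xt + gradient favg xt, xnext i⟫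
          + (L * β / 2) * ‖xnext i - xk‖ ^ 2 + (L * β / 2) * ‖xstar - xnext i‖ ^ 2
        ≤ g xstar + ⟪gradient (f i) xk - gradient (f i) xt + gradient favg xt, xstar⟫
          + (L * β / 2) * ‖xstar - xk‖ ^ 2 := by
    intro i
    refine prox_strong g hgconv _ xk (xnext i) (div_pos hLβ two_pos) (fun y => ?_) xstar
    have := hxnext i y
    rw [hc0] at this
    exact this
  -- per-index key inequality
  have key : ∀ i, F (xnext i) - F xstar
      ≤ ⟪(gradient (f i) xk - gradient (f i) xt + gradient favg xt) - gradient favg xk,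
          xstar - xk⟫
        + 1/(2*(L*(β-1))) * ‖(gradient (f i) xk - gradient (f i) xt + gradient favg xt)
            - gradient favg xk‖ ^ 2
        + (L * β / 2) * (‖xstar - xk‖ ^ 2 - ‖xstar - xnext i‖ ^ 2) := by
    intro i
    set v : EuclideanSpace ℝ (Fin d) :=
      gradient (f i) xk - gradient (f i) xt + gradient favg xt with hv
    set Dd : EuclideanSpace ℝ (Fin d) := v - gradient favg xk with hDd
    have h1 := hprox i
    have h2 : favg (xnext i) ≤ favg xk + ⟪gradient favg xk, xnext i - xk⟫
        + L/2 * ‖xnext i - xk‖ ^ 2 := descent_lemma favg hdfavg hL hlipavg xk (xnext i)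
    have h3 : favg xk + ⟪gradient favg xk, xstar - xk⟫ ≤ favg xstar :=
      convex_grad_le favg hconvavg hdfavg xk xstar
    have h4 : ⟪Dd, xk - xnext i⟫
        ≤ 1/(2*(L*(β-1))) * ‖Dd‖ ^ 2 + (L*(β-1))/2 * ‖xk - xnext i‖ ^ 2 :=
      young_inner _ _ (mul_pos hL hb1)
    have h5sq : ‖xk - xnext i‖ ^ 2 = ‖xnext i - xk‖ ^ 2 := by rw [norm_sub_rev]
    have hinner : ⟪gradient favg xk, xnext i - xk⟫ + ⟪v, xstar⟫ - ⟪v, xnext i⟫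
        = ⟪Dd, xstar - xk⟫ + ⟪Dd, xk - xnext i⟫ + ⟪gradient favg xk, xstar - xk⟫ := by
      simp only [hDd, inner_sub_left, inner_sub_right]
      ring
    rw [hF (xnext i), hF xstar]
    rw [h5sq] at h4
    linarith [h1, h2, h3, h4, hinner]
  -- global definition of the deviation vectors
  set D : Fin n → EuclideanSpace ℝ (Fin d) := fun i =>
    (gradient (f i) xk - gradient (f i) xt + gradient favg xt) - gradient favg xk with hD
  have keyD : ∀ i, F (xnext i) - F xstar
      ≤ ⟪D i, xstar - xk⟫ + 1/(2*(L*(β-1))) * ‖D i‖ ^ 2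
        + (L * β / 2) * (‖xstar - xk‖ ^ 2 - ‖xstar - xnext i‖ ^ 2) := by
    intro i
    simp only [hD]
    exact key i
  have hnG : ∀ w, ∑ i, gradient (f i) w = (n:ℝ) • gradient favg w := by
    intro w
    rw [hgradavg, smul_smul, show (n:ℝ) * (1/(n:ℝ)) = 1 by field_simp, one_smul]
  have hΔsum : ∑ i, D i = 0 := by
    simp only [hD]
    rw [Finset.sum_sub_distrib, Finset.sum_add_distrib, Finset.sum_sub_distrib,
      Finset.sum_const, Finset.sum_const, Finset.card_univ, Fintype.card_fin, hnG xk, hnG xt,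
      ← Nat.cast_smul_eq_nsmul ℝ n (gradient favg xt),
      ← Nat.cast_smul_eq_nsmul ℝ n (gradient favg xk)]
    abel
  -- variance-type bound
  have hvar1 : ∀ w, (1/(n:ℝ)) * ∑ i, ‖gradient (f i) w - gradient (f i) xstar‖ ^ 2
      ≤ 2*L*(F w - F xstar) := by
    intro w
    have h1 : ∑ i, ‖gradient (f i) w - gradient (f i) xstar‖ ^ 2
        ≤ ∑ i, 2*L*(f i w - f i xstar - ⟪gradient (f i) xstar, w - xstar⟫) :=
      Finset.sum_le_sum (fun i _ => hcoco i w xstar)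
    have h2 : (1/(n:ℝ)) * ∑ i, 2*L*(f i w - f i xstar - ⟪gradient (f i) xstar, w - xstar⟫)
        = 2*L*(favg w - favg xstar - ⟪gradient favg xstar, w - xstar⟫) := by
      rw [hfavg w, hfavg xstar, hgradavg xstar]
      rw [show ⟪(1/(n:ℝ)) • ∑ i, gradient (f i) xstar, w - xstar⟫
          = (1/(n:ℝ)) * ∑ i, ⟪gradient (f i) xstar, w - xstar⟫ by
        rw [real_inner_smul_left, sum_inner]]
      rw [← Finset.mul_sum, Finset.sum_sub_distrib, Finset.sum_sub_distrib]
      ring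
    have h3 := hopt w
    have h4 : favg w - favg xstar - ⟪gradient favg xstar, w - xstar⟫ ≤ F w - F xstar := by
      rw [hF w, hF xstar]; linarith
    calc (1/(n:ℝ)) * ∑ i, ‖gradient (f i) w - gradient (f i) xstar‖ ^ 2
        ≤ (1/(n:ℝ)) * ∑ i, 2*L*(f i w - f i xstar - ⟪gradient (f i) xstar, w - xstar⟫) :=
          mul_le_mul_of_nonneg_left h1 (by positivity)
      _ = 2*L*(favg w - favg xstar - ⟪gradient favg xstar, w - xstar⟫) := h2
      _ ≤ 2*L*(F w - F xstar) := by nlinarith [h4, hL]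
  have habar : (1/(n:ℝ)) • ∑ j, (gradient (f j) xk - gradient (f j) xstar)
      = gradient favg xk - gradient favg xstar := by
    rw [Finset.sum_sub_distrib, smul_sub, hgradavg xk, hgradavg xstar]
  have hbbar : (1/(n:ℝ)) • ∑ j, (gradient (f j) xt - gradient (f j) xstar)
      = gradient favg xt - gradient favg xstar := by
    rw [Finset.sum_sub_distrib, smul_sub, hgradavg xt, hgradavg xstar]
  have hDab : ∀ i, D i
      = ((gradient (f i) xk - gradient (f i) xstar)
          - (1/(n:ℝ)) • ∑ j, (gradient (f j) xk - gradient (f j) xstar))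
        - ((gradient (f i) xt - gradient (f i) xstar)
          - (1/(n:ℝ)) • ∑ j, (gradient (f j) xt - gradient (f j) xstar)) := by
    intro i
    rw [habar, hbbar]
    simp only [hD]
    abel
  have hstep : ∑ i, ‖D i‖ ^ 2
      ≤ 2 * ∑ i, ‖gradient (f i) xk - gradient (f i) xstar‖ ^ 2
        + 2 * ∑ i, ‖gradient (f i) xt - gradient (f i) xstar‖ ^ 2 := by
    have h2 : ∑ i, ‖D i‖ ^ 2 ≤ ∑ i,
        (2 * ‖(gradient (f i) xk - gradient (f i) xstar)
            - (1/(n:ℝ)) • ∑ j, (gradient (f j) xk - gradient (f j) xstar)‖ ^ 2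
          + 2 * ‖(gradient (f i) xt - gradient (f i) xstar)
            - (1/(n:ℝ)) • ∑ j, (gradient (f j) xt - gradient (f j) xstar)‖ ^ 2) :=
      Finset.sum_le_sum (fun i _ => by rw [hDab i]; exact norm_sub_sq_le_two _ _)
    have h4 : ∑ i,
        (2 * ‖(gradient (f i) xk - gradient (f i) xstar)
            - (1/(n:ℝ)) • ∑ j, (gradient (f j) xk - gradient (f j) xstar)‖ ^ 2
          + 2 * ‖(gradient (f i) xt - gradient (f i) xstar)
            - (1/(n:ℝ)) • ∑ j, (gradient (f j) xt - gradient (f j) xstar)‖ ^ 2)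
        = 2 * ∑ i, ‖(gradient (f i) xk - gradient (f i) xstar)
            - (1/(n:ℝ)) • ∑ j, (gradient (f j) xk - gradient (f j) xstar)‖ ^ 2
          + 2 * ∑ i, ‖(gradient (f i) xt - gradient (f i) xstar)
            - (1/(n:ℝ)) • ∑ j, (gradient (f j) xt - gradient (f j) xstar)‖ ^ 2 := by
      rw [Finset.sum_add_distrib, ← Finset.mul_sum, ← Finset.mul_sum]
    have h3a := sum_sq_dev_le hn (fun j => gradient (f j) xk - gradient (f j) xstar)
    have h3b := sum_sq_dev_le hn (fun j => gradient (f j) xt - gradient (f j) xstar)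
    linarith [h2, h4, h3a, h3b]
  have hvar : (1/(n:ℝ)) * ∑ i, ‖D i‖ ^ 2
      ≤ 4*L*((F xk - F xstar) + (F xt - F xstar)) := by
    have h8 := mul_le_mul_of_nonneg_left hstep (by positivity : (0:ℝ) ≤ 1/(n:ℝ))
    have h9 : (1/(n:ℝ)) * (2 * ∑ i, ‖gradient (f i) xk - gradient (f i) xstar‖ ^ 2
        + 2 * ∑ i, ‖gradient (f i) xt - gradient (f i) xstar‖ ^ 2)
        = 2 * ((1/(n:ℝ)) * ∑ i, ‖gradient (f i) xk - gradient (f i) xstar‖ ^ 2)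
          + 2 * ((1/(n:ℝ)) * ∑ i, ‖gradient (f i) xt - gradient (f i) xstar‖ ^ 2) := by
      ring
    rw [h9] at h8
    linarith [h8, hvar1 xk, hvar1 xt]
  -- assemble
  have keysum : ∑ i, F (xnext i) ≤ ∑ i, (F xstar + ⟪D i, xstar - xk⟫
      + 1/(2*(L*(β-1))) * ‖D i‖ ^ 2
      + (L * β / 2) * (‖xstar - xk‖ ^ 2 - ‖xstar - xnext i‖ ^ 2)) :=
    Finset.sum_le_sum (fun i _ => by linarith [keyD i])
  have hexp : ∑ i, (F xstar + ⟪D i, xstar - xk⟫ + 1/(2*(L*(β-1))) * ‖D i‖ ^ 2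
      + (L * β / 2) * (‖xstar - xk‖ ^ 2 - ‖xstar - xnext i‖ ^ 2))
      = (n:ℝ) * F xstar + 1/(2*(L*(β-1))) * ∑ i, ‖D i‖ ^ 2
        + (L * β / 2) * ∑ i, (‖xstar - xk‖ ^ 2 - ‖xstar - xnext i‖ ^ 2) := by
    rw [Finset.sum_add_distrib, Finset.sum_add_distrib, Finset.sum_add_distrib,
      ← Finset.mul_sum, ← Finset.mul_sum, ← sum_inner, hΔsum, inner_zero_left,
      Finset.sum_const, Finset.card_univ, Fintype.card_fin, nsmul_eq_mul]
    ring
  have hEineq : (1/(n:ℝ)) * ∑ i, F (xnext i)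
      ≤ F xstar + 1/(2*(L*(β-1))) * ((1/(n:ℝ)) * ∑ i, ‖D i‖ ^ 2)
        + (L * β / 2) * ((1/(n:ℝ)) * ∑ i, (‖xstar - xk‖ ^ 2 - ‖xstar - xnext i‖ ^ 2)) := by
    have h6 := mul_le_mul_of_nonneg_left keysum (by positivity : (0:ℝ) ≤ 1/(n:ℝ))
    rw [hexp] at h6
    have h7 : (1/(n:ℝ)) * ((n:ℝ) * F xstar + 1/(2*(L*(β-1))) * ∑ i, ‖D i‖ ^ 2
        + (L * β / 2) * ∑ i, (‖xstar - xk‖ ^ 2 - ‖xstar - xnext i‖ ^ 2))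
        = F xstar + 1/(2*(L*(β-1))) * ((1/(n:ℝ)) * ∑ i, ‖D i‖ ^ 2)
          + (L * β / 2) * ((1/(n:ℝ)) * ∑ i, (‖xstar - xk‖ ^ 2 - ‖xstar - xnext i‖ ^ 2)) := by
      field_simp
    rw [h7] at h6
    exact h6
  have hC1 : (0:ℝ) < 1/(2*(L*(β-1))) := by
    apply div_pos one_pos
    nlinarith [mul_pos hL hb1]
  have hfin : 1/(2*(L*(β-1))) * ((1/(n:ℝ)) * ∑ i, ‖D i‖ ^ 2)
      ≤ 2/(β-1) * ((F xk - F xstar) + (F xt - F xstar)) := by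
    have h10 := mul_le_mul_of_nonneg_left hvar hC1.le
    have h11 : 1/(2*(L*(β-1))) * (4*L*((F xk - F xstar) + (F xt - F xstar)))
        = 2/(β-1) * ((F xk - F xstar) + (F xt - F xstar)) := by
      field_simp
      ring
    rw [h11] at h10
    exact h10
  linarith [hEineq, hfin]
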